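/- For every Z ⊆ V(G)∖X: the graph G − Z admits a consistent labeling extending φ₀ if and only if every connected component of H − Z contains at most one vertex of T (that is, Z is a multiway cut for the terminal set T in H). -/

import Mathlib

/-!
STATEMENT 12: let `G` be a finite undirected graph with a group labeling `ψ` by a
group `Γ`, `X ⊆ V(G)`, and assume the instance is untangled: `ψ(e,u) = 0` for every
edge `e = uv` of `G − X`.  Let `φ₀ : X → Γ` be consistent on the edges inside `X`.
Let `T = {φ₀(u) + ψ(uv,u) : uv ∈ E(G), u ∈ X, v ∉ X} ⊆ Γ` and let `H` be the
undirected graph on `(V(G) ∖ X) ⊎ T` whose edges are the edges of `G − X` together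
with, for every edge `uv` with `u ∈ X`, `v ∉ X`, an edge between
`φ₀(u) + ψ(uv,u) ∈ T` and `v`.  Then for every `Z ⊆ V(G) ∖ X`: the graph `G − Z`
admits a consistent labeling extending `φ₀` iff every connected component of
`H − Z` contains at most one vertex of `T` (i.e. `Z` is a multiway cut for `T`
in `H`).

Encodings: `ψ : V → V → Γ` with `ψ u v` the label `ψ(e,u)` of the edge `e = uv`
read from `u` towards `v`; `φ₀ : V → Γ` (only its values on `X` matter); `H` lives
on the vertex type `V ⊕ Γ`, the vertices of `(V ∖ X)` being the relevant `inl`'s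
and the vertices of `T` the relevant `inr`'s.
-/

variable {V Γ : Type*}

/-- The adjacency of the graph `H`: edges of `G − X`, plus an edge between
`φ₀ u + ψ u v ∈ T ⊆ Γ` and `v` for every edge `uv` of `G` with `u ∈ X`, `v ∉ X`. -/
def HAdj12 (G : SimpleGraph V) (X : Set V) (ψ : V → V → Γ) (φ₀ : V → Γ) [Add Γ] :
    (V ⊕ Γ) → (V ⊕ Γ) → Prop
  | .inl v, .inl w => v ∉ X ∧ w ∉ X ∧ G.Adj v w
  | .inl v, .inr g => v ∉ X ∧ ∃ u ∈ X, G.Adj u v ∧ g = φ₀ u + ψ u v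
  | .inr g, .inl v => v ∉ X ∧ ∃ u ∈ X, G.Adj u v ∧ g = φ₀ u + ψ u v
  | .inr _, .inr _ => False

/-- A vertex of `H` survives the deletion of `Z ⊆ V ∖ X`. -/
def hOK (Z : Set V) : (V ⊕ Γ) → Prop
  | .inl v => v ∉ Z
  | .inr _ => True

/-- Reachability in `H − Z`. -/
def hReach12 (G : SimpleGraph V) (X : Set V) (ψ : V → V → Γ) (φ₀ : V → Γ) [Add Γ]
    (Z : Set V) : (V ⊕ Γ) → (V ⊕ Γ) → Prop :=
  Relation.ReflTransGen fun a b => HAdj12 G X ψ φ₀ a b ∧ hOK Z a ∧ hOK Z b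

theorem stmt_12 [Fintype V] [AddGroup Γ] (G : SimpleGraph V) (X : Set V)
    (ψ : V → V → Γ)
    -- `ψ` is a group labeling of `G`
    (hψ : ∀ u v : V, G.Adj u v → ψ u v + ψ v u = 0)
    -- the instance is untangled: labels of edges of `G − X` are `0`
    (huntangled : ∀ u v : V, G.Adj u v → u ∉ X → v ∉ X → ψ u v = 0)
    -- `φ₀` is consistent on the edges inside `X`
    (φ₀ : V → Γ)
    (hφ₀ : ∀ u ∈ X, ∀ v ∈ X, G.Adj u v → φ₀ v = φ₀ u + ψ u v)
    -- `Z ⊆ V(G) ∖ X`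
    (Z : Set V) (hZX : Disjoint Z X) :
    -- `G − Z` admits a consistent labeling extending `φ₀` …
    (∃ φ : V → Γ, (∀ x ∈ X, φ x = φ₀ x) ∧
      ∀ u v : V, G.Adj u v → u ∉ Z → v ∉ Z → φ v = φ u + ψ u v) ↔
    -- … iff every connected component of `H − Z` contains at most one vertex of `T`.
    (∀ g₁ g₂ : Γ,
      (∃ u v : V, u ∈ X ∧ v ∉ X ∧ G.Adj u v ∧ g₁ = φ₀ u + ψ u v) →
      (∃ u v : V, u ∈ X ∧ v ∉ X ∧ G.Adj u v ∧ g₂ = φ₀ u + ψ u v) →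
      hReach12 G X ψ φ₀ Z (.inr g₁) (.inr g₂) → g₁ = g₂) := by
  classical
  have hAdjSymm : ∀ a b, HAdj12 G X ψ φ₀ a b → HAdj12 G X ψ φ₀ b a := by
    rintro (v | g) (w | h) hadj
    · exact ⟨hadj.2.1, hadj.1, hadj.2.2.symm⟩
    · exact hadj
    · exact hadj
    · exact hadj.elim
  have hRsymm : ∀ a b, hReach12 G X ψ φ₀ Z a b → hReach12 G X ψ φ₀ Z b a := by
    intro a b h
    refine @Std.Symm.symm _ _ (@Relation.ReflTransGen.symmetric _ _ ⟨?_⟩) _ _ h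
    rintro x y ⟨h1, h2, h3⟩
    exact ⟨hAdjSymm x y h1, h3, h2⟩
  constructor
  · rintro ⟨φ, hφX, hφ⟩ g₁ g₂ _ _ hreach
    have key : ∀ a b : V ⊕ Γ, hReach12 G X ψ φ₀ Z a b →
        Sum.elim φ id a = Sum.elim φ id b := by
      intro a b h
      induction h with
      | refl => rfl
      | tail _ hstep ih =>
        rw [ih]
        obtain ⟨hadj, hoa, hob⟩ := hstep
        rename_i c d _
        match c, d with
        | .inl v, .inl w =>
          obtain ⟨hvX, hwX, hvw⟩ := hadj
          simp only [Sum.elim_inl]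
          rw [hφ v w hvw hoa hob, huntangled v w hvw hvX hwX, add_zero]
        | .inl v, .inr g =>
          obtain ⟨hvX, u, huX, huv, hg⟩ := hadj
          have huZ : u ∉ Z := fun h => (Set.disjoint_left.mp hZX h) huX
          simp only [Sum.elim_inl, Sum.elim_inr, id]
          rw [hφ u v huv huZ hoa, hφX u huX, hg]
        | .inr g, .inl v =>
          obtain ⟨hvX, u, huX, huv, hg⟩ := hadj
          have huZ : u ∉ Z := fun h => (Set.disjoint_left.mp hZX h) huX
          simp only [Sum.elim_inl, Sum.elim_inr, id]
          rw [hφ u v huv huZ hob, hφX u huX, hg]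
        | .inr g, .inr g' => exact hadj.elim
    exact key _ _ hreach
  · intro hcut
    -- any terminal reaching a vertex is in T
    have hTmem : ∀ (g : Γ) (x : V), hReach12 G X ψ φ₀ Z (.inr g) (.inl x) →
        ∃ u v, u ∈ X ∧ v ∉ X ∧ G.Adj u v ∧ g = φ₀ u + ψ u v := by
      intro g x h
      rcases Relation.ReflTransGen.cases_head h with heq | ⟨b, hstep, _⟩
      · exact absurd heq (by simp)
      · obtain ⟨hadj, _, _⟩ := hstep
        match b, hadj with
        | .inl w, ⟨hwX, u, huX, huw, hg⟩ => exact ⟨u, w, huX, hwX, huw, hg⟩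
        | .inr _, hadj => exact hadj.elim
    -- vertices in X are not reachable from any terminal
    have hnotX : ∀ x ∈ X, ¬ ∃ g : Γ, hReach12 G X ψ φ₀ Z (.inr g) (.inl x) := by
      rintro x hx ⟨g, hreach⟩
      rcases Relation.ReflTransGen.cases_tail hreach with heq | ⟨c, _, hstep, _, _⟩
      · exact absurd heq (by simp)
      · match c, hstep with
        | .inl w, ⟨_, hxX, _⟩ => exact hxX hx
        | .inr _, ⟨hxX, _⟩ => exact hxX hx
    let φ : V → Γ := fun v =>
      if h : ∃ g : Γ, hReach12 G X ψ φ₀ Z (.inr g) (.inl v) then h.choose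
      else if v ∈ X then φ₀ v else 0
    have huniq : ∀ (v : V) (g : Γ), hReach12 G X ψ φ₀ Z (.inr g) (.inl v) → φ v = g := by
      intro v g h
      have hex : ∃ g' : Γ, hReach12 G X ψ φ₀ Z (.inr g') (.inl v) := ⟨g, h⟩
      have h1 : φ v = hex.choose := dif_pos hex
      have h2 := hex.choose_spec
      have h3 : hReach12 G X ψ φ₀ Z (.inr hex.choose) (.inr g) :=
        Relation.ReflTransGen.trans h2 (hRsymm _ _ h)
      rw [h1]
      exact hcut _ _ (hTmem _ _ h2) (hTmem _ _ h) h3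
    have hφXval : ∀ x ∈ X, φ x = φ₀ x := by
      intro x hx
      show dite _ _ _ = _
      rw [dif_neg (hnotX x hx), if_pos hx]
    refine ⟨φ, hφXval, ?_⟩
    intro u v huv huZ hvZ
    by_cases huX : u ∈ X <;> by_cases hvX : v ∈ X
    · rw [hφXval u huX, hφXval v hvX]; exact hφ₀ u huX v hvX huv
    · have hstep : hReach12 G X ψ φ₀ Z (.inr (φ₀ u + ψ u v)) (.inl v) :=
        Relation.ReflTransGen.single ⟨⟨hvX, u, huX, huv, rfl⟩, trivial, hvZ⟩
      rw [huniq v _ hstep, hφXval u huX]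
    · have hstep : hReach12 G X ψ φ₀ Z (.inr (φ₀ v + ψ v u)) (.inl u) :=
        Relation.ReflTransGen.single ⟨⟨huX, v, hvX, huv.symm, rfl⟩, trivial, huZ⟩
      rw [huniq u _ hstep, hφXval v hvX, add_assoc, hψ v u huv.symm, add_zero]
    · have hψ0 : ψ u v = 0 := huntangled u v huv huX hvX
      rw [hψ0, add_zero]
      have hstep : (fun a b => HAdj12 G X ψ φ₀ a b ∧ hOK Z a ∧ hOK Z b)
          (Sum.inl u) (Sum.inl v) := ⟨⟨huX, hvX, huv⟩, huZ, hvZ⟩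
      by_cases hex : ∃ g : Γ, hReach12 G X ψ φ₀ Z (.inr g) (.inl u)
      · obtain ⟨g, hr⟩ := hex
        rw [huniq u g hr, huniq v g (hr.tail hstep)]
      · have hexv : ¬ ∃ g : Γ, hReach12 G X ψ φ₀ Z (.inr g) (.inl v) := by
          rintro ⟨g, hr⟩
          exact hex ⟨g, hr.tail ⟨hAdjSymm _ _ hstep.1, hvZ, huZ⟩⟩
        show dite _ _ _ = dite _ _ _
        rw [dif_neg hex, dif_neg hexv, if_neg huX, if_neg hvX]
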